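/- Under the stated assumptions, the function v := m + Q has a simple pole at −p₁ + πi with residue −i and a simple pole at p₁ − 2πi with residue i; precisely, (w − (−p₁ + πi))·(m(w) + Q(w)) tends to −i as w → −p₁ + πi (w ≠ −p₁ + πi), and (w − (p₁ − 2πi))·(m(w) + Q(w)) tends to i as w → p₁ − 2πi (w ≠ p₁ − 2πi). -/

import Mathlib

open Complex Filter Topology

/-- The complex hyperbolic cotangent. -/
noncomputable def Complex.coth (z : ℂ) : ℂ := Complex.cosh z / Complex.sinh z



lemma sinh_pi_I : Complex.sinh (↑Real.pi * I) = 0 := by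
  rw [Complex.sinh_mul_I, ← Complex.ofReal_sin, Real.sin_pi, Complex.ofReal_zero, zero_mul]

lemma cosh_pi_I : Complex.cosh (↑Real.pi * I) = -1 := by
  rw [Complex.cosh_mul_I, ← Complex.ofReal_cos, Real.cos_pi]; norm_num

lemma sinh_two_pi_I : Complex.sinh (2 * ↑Real.pi * I) = 0 := by
  have : (2 * ↑Real.pi * I : ℂ) = ↑(2 * Real.pi) * I := by push_cast; ring
  rw [this, Complex.sinh_mul_I, ← Complex.ofReal_sin, Real.sin_two_pi, Complex.ofReal_zero, zero_mul]

lemma cosh_two_pi_I : Complex.cosh (2 * ↑Real.pi * I) = 1 := by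
  have : (2 * ↑Real.pi * I : ℂ) = ↑(2 * Real.pi) * I := by push_cast; ring
  rw [this, Complex.cosh_mul_I, ← Complex.ofReal_cos, Real.cos_two_pi, Complex.ofReal_one]

lemma coth_sub_pi_I (z : ℂ) : Complex.coth (z - ↑Real.pi * I) = Complex.coth z := by
  unfold Complex.coth
  rw [Complex.sinh_sub, Complex.cosh_sub, sinh_pi_I, cosh_pi_I]
  ring_nf

lemma sinh_ne_of_re {z : ℂ} (h : z.re ≠ 0) : Complex.sinh z ≠ 0 := by
  intro h0
  rw [show Complex.sinh z = (Complex.exp z - Complex.exp (-z))/2 from rfl, div_eq_zero_iff] at h0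
  have h1 : Complex.exp z = Complex.exp (-z) := by
    rcases h0 with h0 | h0
    · linear_combination h0
    · norm_num at h0
  have h2 : Complex.exp (2 * z) = 1 := by
    rw [two_mul, Complex.exp_add]
    nth_rewrite 1 [h1]
    rw [← Complex.exp_add]
    simp
  rw [Complex.exp_eq_one_iff] at h2
  obtain ⟨n, hn⟩ := h2
  have := congrArg Complex.re hn
  simp [Complex.mul_re] at this
  exact h (by linarith)

lemma sinh_div3_ne {z : ℂ} (h : z.re ≠ 0) : Complex.sinh (z / 3) ≠ 0 := by
  apply sinh_ne_of_re
  have : (z / 3).re = z.re / 3 := by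
    rw [show (3:ℂ) = ((3:ℝ):ℂ) by norm_num, Complex.div_ofReal_re]
  rw [this]
  exact div_ne_zero h (by norm_num)

lemma sinh_real_mul_I_ne {r : ℝ} (h : Real.sin r ≠ 0) : Complex.sinh (↑r * I) ≠ 0 := by
  rw [Complex.sinh_mul_I, ← Complex.ofReal_sin]
  exact mul_ne_zero (Complex.ofReal_ne_zero.mpr h) Complex.I_ne_zero

lemma tendsto_sub_pole (a : ℂ) : Tendsto (fun w : ℂ => w - a) (𝓝[≠] a) (𝓝[≠] 0) := by
  apply tendsto_nhdsWithin_of_tendsto_nhds_of_eventually_within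
  · have h1 : Tendsto (fun w : ℂ => w - a) (𝓝 a) (𝓝 (a - a)) :=
      ((continuous_id.sub continuous_const).tendsto a)
    rw [sub_self] at h1
    exact h1.mono_left nhdsWithin_le_nhds
  · filter_upwards [self_mem_nhdsWithin] with w hw
    exact sub_ne_zero.mpr hw

lemma tendsto_mul_coth_zero : Tendsto (fun z : ℂ => z * Complex.coth (z / 3)) (𝓝[≠] (0:ℂ)) (𝓝 3) := by
  have h1 : HasDerivAt (fun z : ℂ => Complex.sinh (z / 3)) (1 / 3) 0 := by
    have := (Complex.hasDerivAt_sinh (0/3)).comp 0 ((hasDerivAt_id (0:ℂ)).div_const 3)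
    simpa [Function.comp_def] using this
  have h2 := hasDerivAt_iff_tendsto_slope.mp h1
  have h3 : Tendsto (fun z : ℂ => Complex.sinh (z / 3) / z) (𝓝[≠] (0:ℂ)) (𝓝 (1/3)) := by
    have : (slope (fun z : ℂ => Complex.sinh (z / 3)) 0) = fun z => Complex.sinh (z/3) / z := by
      funext z; simp [slope_def_field]
    rwa [this] at h2
  have h4 : Tendsto (fun z : ℂ => z / Complex.sinh (z / 3)) (𝓝[≠] (0:ℂ)) (𝓝 3) := by
    have := h3.inv₀ (by norm_num)
    simp only [one_div] at this
    have h5 : Tendsto (fun z : ℂ => (Complex.sinh (z/3) / z)⁻¹) (𝓝[≠] (0:ℂ)) (𝓝 3) := by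
      convert this using 2; norm_num
    apply h5.congr
    intro z; rw [inv_div]
  have h6 : Tendsto (fun z : ℂ => Complex.cosh (z / 3)) (𝓝[≠] (0:ℂ)) (𝓝 1) := by
    have h5 : ContinuousAt (fun z : ℂ => Complex.cosh (z / 3)) 0 :=
      (Complex.continuous_cosh.comp (continuous_id.div_const 3)).continuousAt
    have h7 : Tendsto (fun z : ℂ => Complex.cosh (z / 3)) (𝓝[≠] (0:ℂ)) (𝓝 (Complex.cosh (0/3))) :=
      h5.tendsto.mono_left nhdsWithin_le_nhds
    simpa using h7
  have := h4.mul h6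
  rw [mul_one] at this
  apply this.congr
  intro z
  unfold Complex.coth
  ring

lemma tendsto_coth_pole (a : ℂ) :
    Tendsto (fun w : ℂ => (w - a) * Complex.coth ((w - a) / 3)) (𝓝[≠] a) (𝓝 3) :=
  tendsto_mul_coth_zero.comp (tendsto_sub_pole a)

lemma tendsto_coth_reg (a b : ℂ) (h : Complex.sinh ((a - b) / 3) ≠ 0) :
    Tendsto (fun w : ℂ => (w - a) * Complex.coth ((w - b) / 3)) (𝓝[≠] a) (𝓝 0) := by
  have hc : ContinuousAt (fun w : ℂ => Complex.coth ((w - b) / 3)) a := by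
    apply ContinuousAt.div
    · exact (Complex.continuous_cosh.comp ((continuous_id.sub continuous_const).div_const 3)).continuousAt
    · exact (Complex.continuous_sinh.comp ((continuous_id.sub continuous_const).div_const 3)).continuousAt
    · exact h
  have h2 : ContinuousAt (fun w : ℂ => (w - a) * Complex.coth ((w - b) / 3)) a :=
    (continuousAt_id.sub continuousAt_const).mul hc
  have h3 : Tendsto (fun w : ℂ => (w - a) * Complex.coth ((w - b) / 3)) (𝓝[≠] a)
      (𝓝 ((a - a) * Complex.coth ((a - b) / 3))) := h2.tendsto.mono_left nhdsWithin_le_nhds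
  simpa using h3

lemma tendsto_res_div (a d : ℂ) (N D : ℂ → ℂ) (hN : ContinuousAt N a) (h0 : D a = 0)
    (hD : HasDerivAt D d a) (hd : d ≠ 0) :
    Tendsto (fun w => (w - a) * (N w / D w)) (𝓝[≠] a) (𝓝 (N a / d)) := by
  have h2 : Tendsto (fun w => D w / (w - a)) (𝓝[≠] a) (𝓝 d) := by
    have h1 := hasDerivAt_iff_tendsto_slope.mp hD
    have : slope D a = fun w => D w / (w - a) := by
      funext w; simp [slope_def_field, h0]
    rwa [this] at h1
  have h3 := h2.inv₀ hd
  have hN' : Tendsto N (𝓝[≠] a) (𝓝 (N a)) := hN.tendsto.mono_left nhdsWithin_le_nhds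
  have h4 := hN'.mul h3
  rw [← div_eq_mul_inv] at h4
  apply h4.congr'
  filter_upwards [self_mem_nhdsWithin] with w hw
  have hwa : w - a ≠ 0 := sub_ne_zero.mpr hw
  by_cases hDw : D w = 0
  · simp [hDw, hwa]
  · field_simp


section helpers
lemma m_part (ω : ℂ) (hω0 : ω ≠ 0) (k : ℝ) (hk : 0 < k) (x : ℂ)
    (hsx : Complex.sinh x = I * k / ω) (hcx : Complex.cosh x ≠ 0) :
    Filter.Tendsto (fun w : ℂ => (w - x) * ((((Real.pi:ℂ) + 2*I*w)/(6*Real.pi)) *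
      (I * ω^2 * Complex.sinh (2*w) / (ω^2 * (Complex.sinh w)^2 + (k:ℂ)^2))))
      (𝓝[≠] x) (𝓝 ((((Real.pi:ℂ) + 2*I*x)/(6*Real.pi)) * I)) := by
  set N : ℂ → ℂ := fun w => (((Real.pi:ℂ) + 2*I*w)/(6*Real.pi)) * (I * ω^2 * Complex.sinh (2*w)) with hNdef
  set D : ℂ → ℂ := fun w => ω^2 * (Complex.sinh w)^2 + (k:ℂ)^2 with hDdef
  have hk0 : (k:ℂ) ≠ 0 := Complex.ofReal_ne_zero.mpr hk.ne'
  have hsx0 : Complex.sinh x ≠ 0 := by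
    rw [hsx]; exact div_ne_zero (mul_ne_zero Complex.I_ne_zero hk0) hω0
  have h0 : D x = 0 := by
    simp only [hDdef]; rw [hsx]
    field_simp
    linear_combination (k:ℂ)^2 * Complex.I_sq
  set d : ℂ := ω^2 * (2 * Complex.sinh x * Complex.cosh x) with hddef
  have hd : d ≠ 0 :=
    mul_ne_zero (pow_ne_zero 2 hω0) (mul_ne_zero (mul_ne_zero two_ne_zero hsx0) hcx)
  have hD : HasDerivAt D d x := by
    have h1 : HasDerivAt (fun w => (Complex.sinh w)^2)
        ((2:ℕ) * (Complex.sinh x)^(2-1) * Complex.cosh x) x := (Complex.hasDerivAt_sinh x).pow 2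
    have h2 := (h1.const_mul (ω^2)).add_const ((k:ℂ)^2)
    have h3 : ω^2 * ((2:ℕ) * (Complex.sinh x)^(2-1) * Complex.cosh x) = d := by
      simp only [hddef]; push_cast; ring
    rw [h3] at h2
    exact h2
  have hN : ContinuousAt N x := by
    apply ContinuousAt.mul
    · exact ((continuousAt_const.add (continuousAt_const.mul continuousAt_id)).div_const _)
    · exact (continuousAt_const.mul
        (Complex.continuous_sinh.continuousAt.comp (continuousAt_const.mul continuousAt_id)))
  have key := tendsto_res_div x d N D hN h0 hD hd
  have hval : N x / d = (((Real.pi:ℂ) + 2*I*x)/(6*Real.pi)) * I := by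
    have h4 : N x = (((Real.pi:ℂ) + 2*I*x)/(6*Real.pi)) * I * d := by
      simp only [hNdef, hddef]; rw [Complex.sinh_two_mul]; ring
    rw [h4, mul_div_assoc, div_self hd, mul_one]
  rw [hval] at key
  apply key.congr
  intro w
  simp only [hNdef, hDdef]
  ring
end helpers

theorem residues_of_v_at_remaining_poles
    (ω : ℂ) (hω : 0 < ω.im) (k : ℝ) (hk : 0 < k)
    (G₂ m : ℂ → ℂ)
    (hG₂ : ∀ w : ℂ, G₂ w = I * ω ^ 2 * Complex.sinh (2 * w) /
      (ω ^ 2 * (Complex.sinh w) ^ 2 + (k : ℂ) ^ 2))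
    (hm : ∀ w : ℂ, m w = ((Real.pi + 2 * I * w) / (6 * Real.pi)) * G₂ w)
    (p₁ : ℂ) (hp : Complex.sinh p₁ = I * k / ω) (hc : Complex.cosh p₁ ≠ 0)
    (hre : p₁.re ≠ 0)
    (m₁ m₂ m₃ : ℂ)
    (hm₁ : m₁ = -p₁ / (3 * Real.pi) + I / 6)
    (hm₂ : m₂ = -p₁ / (3 * Real.pi) - I / 6)
    (hm₃ : m₃ = -p₁ / (3 * Real.pi) + I / 2)
    (Q : ℂ → ℂ)
    (hQ : ∀ w : ℂ, Q w =
      ((I - m₁) / 3) * Complex.coth ((w - p₁) / 3)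
      - (m₂ / 3) * Complex.coth ((w - p₁ - Real.pi * I) / 3)
      - (m₃ / 3) * Complex.coth ((w - p₁ + Real.pi * I) / 3)
      - ((I - m₁) / 3) * Complex.coth ((w + p₁ - Real.pi * I) / 3)
      + (m₂ / 3) * Complex.coth ((w + p₁) / 3)
      + (m₃ / 3) * Complex.coth ((w + p₁ + Real.pi * I) / 3)) :
    Tendsto (fun w => (w - (-p₁ + Real.pi * I)) * (m w + Q w))
      (𝓝[≠] (-p₁ + Real.pi * I)) (𝓝 (-I)) ∧
    Tendsto (fun w => (w - (p₁ - 2 * Real.pi * I)) * (m w + Q w))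
      (𝓝[≠] (p₁ - 2 * Real.pi * I)) (𝓝 I) := by
  have hω0 : ω ≠ 0 := by
    intro h; rw [h] at hω; simp at hω
  have hπ : Real.pi ≠ 0 := Real.pi_ne_zero
  have hπpos := Real.pi_pos
  have hsin3 : Real.sin (Real.pi/3) ≠ 0 :=
    (Real.sin_pos_of_pos_of_lt_pi (by positivity) (by linarith)).ne'
  have hsin23 : Real.sin (2*Real.pi/3) ≠ 0 :=
    (Real.sin_pos_of_pos_of_lt_pi (by positivity) (by linarith)).ne'
  constructor
  · -- pole at a = -p₁ + π I
    set a : ℂ := -p₁ + Real.pi * I with ha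
    have hsa : Complex.sinh a = I * k / ω := by
      rw [ha, Complex.sinh_add, sinh_pi_I, cosh_pi_I, Complex.sinh_neg, Complex.cosh_neg, hp]
      ring
    have hca : Complex.cosh a = -Complex.cosh p₁ := by
      rw [ha, Complex.cosh_add, sinh_pi_I, cosh_pi_I, Complex.sinh_neg, Complex.cosh_neg]
      ring
    have hca0 : Complex.cosh a ≠ 0 := by rw [hca]; exact neg_ne_zero.mpr hc
    have mP := m_part ω hω0 k hk a hsa hca0
    -- regular coth terms
    have hT1 : Tendsto (fun w : ℂ => (w - a) * Complex.coth ((w - p₁)/3)) (𝓝[≠] a) (𝓝 0) := by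
      apply tendsto_coth_reg a p₁
      apply sinh_div3_ne
      rw [ha]
      have : (-p₁ + ↑Real.pi * I - p₁).re = -2 * p₁.re := by simp; ring
      rw [this]; intro h; apply hre; linarith
    have hT2 : Tendsto (fun w : ℂ => (w - a) * Complex.coth ((w - p₁ - Real.pi * I)/3))
        (𝓝[≠] a) (𝓝 0) := by
      have h := tendsto_coth_reg a (p₁ + Real.pi * I) (by
        apply sinh_div3_ne
        rw [ha]
        have : (-p₁ + ↑Real.pi * I - (p₁ + ↑Real.pi * I)).re = -2 * p₁.re := by simp; ring
        rw [this]; intro h; apply hre; linarith)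
      apply h.congr; intro w; rw [sub_sub]
    have hT3 : Tendsto (fun w : ℂ => (w - a) * Complex.coth ((w - p₁ + Real.pi * I)/3))
        (𝓝[≠] a) (𝓝 0) := by
      have h := tendsto_coth_reg a (p₁ - Real.pi * I) (by
        apply sinh_div3_ne
        rw [ha]
        have : (-p₁ + ↑Real.pi * I - (p₁ - ↑Real.pi * I)).re = -2 * p₁.re := by simp; ring
        rw [this]; intro h; apply hre; linarith)
      apply h.congr; intro w
      rw [show w - p₁ + ↑Real.pi * I = w - (p₁ - ↑Real.pi * I) from by ring]
    have hT4 : Tendsto (fun w : ℂ => (w - a) * Complex.coth ((w + p₁ - Real.pi * I)/3))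
        (𝓝[≠] a) (𝓝 3) := by
      have h := tendsto_coth_pole a
      apply h.congr; intro w
      rw [show (w - a)/3 = (w + p₁ - ↑Real.pi * I)/3 from by rw [ha]; ring]
    have hT5 : Tendsto (fun w : ℂ => (w - a) * Complex.coth ((w + p₁)/3)) (𝓝[≠] a) (𝓝 0) := by
      have h := tendsto_coth_reg a (-p₁) (by
        rw [show (a - -p₁)/3 = ↑(Real.pi/3) * I from by rw [ha]; push_cast; ring]
        exact sinh_real_mul_I_ne hsin3)
      apply h.congr; intro w
      rw [show w + p₁ = w - -p₁ from by ring]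
    have hT6 : Tendsto (fun w : ℂ => (w - a) * Complex.coth ((w + p₁ + Real.pi * I)/3))
        (𝓝[≠] a) (𝓝 0) := by
      have h := tendsto_coth_reg a (-p₁ - Real.pi * I) (by
        rw [show (a - (-p₁ - ↑Real.pi * I))/3 = ↑(2*Real.pi/3) * I from by rw [ha]; push_cast; ring]
        exact sinh_real_mul_I_ne hsin23)
      apply h.congr; intro w
      rw [show w + p₁ + ↑Real.pi * I = w - (-p₁ - ↑Real.pi * I) from by ring]
    have T := mP.add
      ((((((hT1.const_mul ((I - m₁)/3)).sub (hT2.const_mul (m₂/3))).sub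
        (hT3.const_mul (m₃/3))).sub (hT4.const_mul ((I - m₁)/3))).add
        (hT5.const_mul (m₂/3))).add (hT6.const_mul (m₃/3)))
    have hE : ((((Real.pi:ℂ) + 2*I*a)/(6*Real.pi)) * I) +
        ((((((I - m₁)/3 * 0 - m₂/3 * 0) - m₃/3 * 0) - (I - m₁)/3 * 3) + m₂/3 * 0) + m₃/3 * 0)
        = -I := by
      rw [hm₁, ha]
      have hπC : (Real.pi : ℂ) ≠ 0 := Complex.ofReal_ne_zero.mpr hπ
      field_simp
      ring_nf
      linear_combination (-18*p₁ + 18*I*(Real.pi:ℂ)) * Complex.I_sq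
    rw [hE] at T
    apply T.congr
    intro w
    rw [hm w, hG₂ w, hQ w]
    ring
  · -- pole at b = p₁ - 2π I
    set b : ℂ := p₁ - 2 * Real.pi * I with hb
    have hsb : Complex.sinh b = I * k / ω := by
      rw [hb, Complex.sinh_sub, sinh_two_pi_I, cosh_two_pi_I, hp]
      ring
    have hcb : Complex.cosh b = Complex.cosh p₁ := by
      rw [hb, Complex.cosh_sub, sinh_two_pi_I, cosh_two_pi_I]
      ring
    have hcb0 : Complex.cosh b ≠ 0 := by rw [hcb]; exact hc
    have mP := m_part ω hω0 k hk b hsb hcb0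
    have hT1 : Tendsto (fun w : ℂ => (w - b) * Complex.coth ((w - p₁)/3)) (𝓝[≠] b) (𝓝 0) := by
      apply tendsto_coth_reg b p₁
      rw [show (b - p₁)/3 = ↑(-(2*Real.pi/3)) * I from by rw [hb]; push_cast; ring]
      apply sinh_real_mul_I_ne
      rw [Real.sin_neg]; exact neg_ne_zero.mpr hsin23
    have hT2 : Tendsto (fun w : ℂ => (w - b) * Complex.coth ((w - p₁ - Real.pi * I)/3))
        (𝓝[≠] b) (𝓝 3) := by
      have h := tendsto_coth_pole b
      apply h.congr; intro w
      rw [show (w - b)/3 = (w - p₁ - ↑Real.pi * I)/3 + ↑Real.pi * I from by rw [hb]; ring]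
      rw [show (w - p₁ - ↑Real.pi * I)/3 + ↑Real.pi * I
          = (w - p₁ - ↑Real.pi * I)/3 + ↑Real.pi * I from rfl]
      rw [show Complex.coth ((w - p₁ - ↑Real.pi * I)/3 + ↑Real.pi * I)
          = Complex.coth ((w - p₁ - ↑Real.pi * I)/3) from by
        rw [show (w - p₁ - ↑Real.pi * I)/3 = ((w - p₁ - ↑Real.pi * I)/3 + ↑Real.pi * I) - ↑Real.pi * I from by ring]
        rw [coth_sub_pi_I]
        ring_nf]
    have hT3 : Tendsto (fun w : ℂ => (w - b) * Complex.coth ((w - p₁ + Real.pi * I)/3))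
        (𝓝[≠] b) (𝓝 0) := by
      have h := tendsto_coth_reg b (p₁ - Real.pi * I) (by
        rw [show (b - (p₁ - ↑Real.pi * I))/3 = ↑(-(Real.pi/3)) * I from by rw [hb]; push_cast; ring]
        apply sinh_real_mul_I_ne
        rw [Real.sin_neg]; exact neg_ne_zero.mpr hsin3)
      apply h.congr; intro w
      rw [show w - p₁ + ↑Real.pi * I = w - (p₁ - ↑Real.pi * I) from by ring]
    have hT4 : Tendsto (fun w : ℂ => (w - b) * Complex.coth ((w + p₁ - Real.pi * I)/3))
        (𝓝[≠] b) (𝓝 0) := by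
      have h := tendsto_coth_reg b (-p₁ + Real.pi * I) (by
        apply sinh_div3_ne
        rw [hb]
        have : (p₁ - 2 * ↑Real.pi * I - (-p₁ + ↑Real.pi * I)).re = 2 * p₁.re := by simp; ring
        rw [this]; intro h; apply hre; linarith)
      apply h.congr; intro w
      rw [show w + p₁ - ↑Real.pi * I = w - (-p₁ + ↑Real.pi * I) from by ring]
    have hT5 : Tendsto (fun w : ℂ => (w - b) * Complex.coth ((w + p₁)/3)) (𝓝[≠] b) (𝓝 0) := by
      have h := tendsto_coth_reg b (-p₁) (by
        apply sinh_div3_ne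
        rw [hb]
        have : (p₁ - 2 * ↑Real.pi * I - -p₁).re = 2 * p₁.re := by simp; ring
        rw [this]; intro h; apply hre; linarith)
      apply h.congr; intro w
      rw [show w + p₁ = w - -p₁ from by ring]
    have hT6 : Tendsto (fun w : ℂ => (w - b) * Complex.coth ((w + p₁ + Real.pi * I)/3))
        (𝓝[≠] b) (𝓝 0) := by
      have h := tendsto_coth_reg b (-p₁ - Real.pi * I) (by
        apply sinh_div3_ne
        rw [hb]
        have : (p₁ - 2 * ↑Real.pi * I - (-p₁ - ↑Real.pi * I)).re = 2 * p₁.re := by simp; ring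
        rw [this]; intro h; apply hre; linarith)
      apply h.congr; intro w
      rw [show w + p₁ + ↑Real.pi * I = w - (-p₁ - ↑Real.pi * I) from by ring]
    have T := mP.add
      ((((((hT1.const_mul ((I - m₁)/3)).sub (hT2.const_mul (m₂/3))).sub
        (hT3.const_mul (m₃/3))).sub (hT4.const_mul ((I - m₁)/3))).add
        (hT5.const_mul (m₂/3))).add (hT6.const_mul (m₃/3)))
    have hE : ((((Real.pi:ℂ) + 2*I*b)/(6*Real.pi)) * I) +
        ((((((I - m₁)/3 * 0 - m₂/3 * 3) - m₃/3 * 0) - (I - m₁)/3 * 0) + m₂/3 * 0) + m₃/3 * 0)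
        = I := by
      rw [hm₂, hb]
      have hπC : (Real.pi : ℂ) ≠ 0 := Complex.ofReal_ne_zero.mpr hπ
      field_simp
      ring_nf
      linear_combination (18*p₁ - 36*I*(Real.pi:ℂ)) * Complex.I_sq
    rw [hE] at T
    apply T.congr
    intro w
    rw [hm w, hG₂ w, hQ w]
    ring
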